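/- Suppose y ≪ z are positive-valued functions on ω, and for every n ∈ ω, T_n is a y-sized tree with an infinite branch h_n ∈ [T_n]. Suppose f ∈ ω^ω satisfies: for all k, f↾k is an initial segment of h_k. Then there exists a z-sized tree T* and a sequence of integers ⟨m_i : i ∈ ω⟩ such that for every η ∈ ω^{<ω}: if η is an initial segment of f, i ∈ ω, length(η) ≥ m_i, and ν ∈ ω^{<ω} extends η with ν ∈ T_{m_i}, then ν ∈ T*. -/

import Mathlib

open Filter

/-- The initial segment of `f` of length `n`, as a finite sequence. -/
def seg (f : ℕ → ℕ) (n : ℕ) : List ℕ := (List.range n).map f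

/-- A tree on `ω`: a downward-closed set of finite sequences (with the
convention `η↾m = η.take m = η` when `m ≥ length η`). -/
def IsTree (T : Set (List ℕ)) : Prop := ∀ η ∈ T, ∀ m, η.take m ∈ T

/-- `T` is `x`-sized: the `n`-th level of `T` is finite of size at most `x n`. -/
def Sized (x : ℕ → ℕ) (T : Set (List ℕ)) : Prop :=
  ∀ n, {η ∈ T | η.length = n}.Finite ∧ Set.ncard {η ∈ T | η.length = n} ≤ x n

/-- `f` is an infinite branch of `T` (i.e. `f ∈ [T]`). -/
def Branch (T : Set (List ℕ)) (f : ℕ → ℕ) : Prop := ∀ n, seg f n ∈ T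

/-- `x ≪ y`: pointwise `x n ≤ y n` and `y n / x n → ∞`. -/
def LL (x y : ℕ → ℕ) : Prop :=
  (∀ n, x n ≤ y n) ∧ Tendsto (fun n => (y n : ℝ) / (x n : ℝ)) atTop atTop

lemma seg_length (f : ℕ → ℕ) (n : ℕ) : (seg f n).length = n := by
  simp [seg]

lemma seg_take (f : ℕ → ℕ) (n m : ℕ) : (seg f n).take m = seg f (min m n) := by
  simp [seg, ← List.map_take, List.take_range]

lemma seg_prefix (f : ℕ → ℕ) {a b : ℕ} (hab : a ≤ b) : seg f a <+: seg f b := by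
  have : (seg f b).take a = seg f a := by rw [seg_take, min_eq_left hab]
  rw [← this]; exact List.take_prefix _ _

theorem stmt5 (y z : ℕ → ℕ) (hy : ∀ n, 0 < y n) (hz : ∀ n, 0 < z n)
    (hyz : LL y z) (T : ℕ → Set (List ℕ))
    (hT : ∀ n, IsTree (T n)) (hTy : ∀ n, Sized y (T n))
    (h : ℕ → ℕ → ℕ) (hh : ∀ n, Branch (T n) (h n))
    (f : ℕ → ℕ) (hf : ∀ k, seg f k = seg (h k) k) :
    ∃ (Tstar : Set (List ℕ)) (m : ℕ → ℕ),
      IsTree Tstar ∧ Sized z Tstar ∧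
      ∀ η : List ℕ, η = seg f η.length →
        ∀ i, m i ≤ η.length →
          ∀ ν : List ℕ, η <+: ν → ν ∈ T (m i) → ν ∈ Tstar := by
  -- choose thresholds N i with (i+2) * y n ≤ z n for n ≥ N i
  have hN : ∀ i : ℕ, ∃ N, ∀ n ≥ N, (i + 2) * y n ≤ z n := by
    intro i
    obtain ⟨N, hN⟩ := (eventually_atTop).1 (hyz.2.eventually_ge_atTop ((i : ℝ) + 2))
    refine ⟨N, fun n hn => ?_⟩
    have h1 := hN n hn
    have hy' : (0:ℝ) < (y n : ℝ) := by exact_mod_cast hy n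
    rw [le_div_iff₀ hy'] at h1
    have : ((i + 2) * y n : ℝ) ≤ (z n : ℝ) := by push_cast; linarith
    exact_mod_cast this
  choose N hNspec using hN
  set m : ℕ → ℕ := fun i => Nat.rec (N 0) (fun i mi => max (mi + 1) (N (i+1))) i with hm
  have hmsucc : ∀ i, m i < m (i+1) := fun i =>
    lt_of_lt_of_le (Nat.lt_succ_self _) (le_max_left _ _)
  have hmmono : StrictMono m := strictMono_nat_of_lt_succ hmsucc
  have hmN : ∀ i, N i ≤ m i := by
    intro i; cases i with
    | zero => exact le_refl _
    | succ i => exact le_max_right _ _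
  have hmle : ∀ i, i ≤ m i := fun i => hmmono.le_apply
  -- the tree
  set Tstar : Set (List ℕ) :=
    ⋃ i, {ν ∈ T (m i) | seg f (min (m i) ν.length) <+: ν} with hTstar
  refine ⟨Tstar, m, ?_, ?_, ?_⟩
  · -- IsTree
    intro η hη k
    rw [hTstar, Set.mem_iUnion] at hη ⊢
    obtain ⟨i, hηT, hηp⟩ := hη
    refine ⟨i, hT (m i) η hηT k, ?_⟩
    have hlen : (η.take k).length = min k η.length := List.length_take
    rw [hlen]
    have hle : min (m i) (min k η.length) ≤ min (m i) η.length := by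
      exact min_le_min (le_refl _) (min_le_right _ _)
    have hp1 : seg f (min (m i) (min k η.length)) <+: η :=
      (seg_prefix f hle).trans hηp
    rw [List.prefix_take_iff]
    exact ⟨hp1, by rw [seg_length]; omega⟩
  · -- Sized
    intro n
    by_cases hcase : ∃ i, m i < n
    · -- j = max index with m j < n
      set I : Finset ℕ := (Finset.range n).filter (fun i => m i < n) with hI
      have hIne : I.Nonempty := by
        obtain ⟨i, hi⟩ := hcase
        exact ⟨i, by simp [hI, Finset.mem_filter, Finset.mem_range]; exact ⟨lt_of_le_of_lt (hmle i) hi, hi⟩⟩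
      set j := I.max' hIne with hj
      have hjn : m j < n := by
        have := I.max'_mem hIne
        simp [hI, Finset.mem_filter] at this
        exact this.2
      have hmax : ∀ i, m i < n → i ≤ j := by
        intro i hi
        exact I.le_max' i (by simp [hI, Finset.mem_filter, Finset.mem_range]; exact ⟨lt_of_le_of_lt (hmle i) hi, hi⟩)
      -- finite superset as a Finset
      set S : Finset (List ℕ) :=
        insert (seg f n) ((Finset.range (j+1)).biUnion
          (fun i => ((hTy (m i) n).1).toFinset)) with hS
      have hsub : {η ∈ Tstar | η.length = n} ⊆ ↑S := by
        rintro η ⟨hηT, hηl⟩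
        rw [hTstar, Set.mem_iUnion] at hηT
        obtain ⟨i, hηT, hηp⟩ := hηT
        rw [hS]
        simp only [Finset.coe_insert, Set.mem_insert_iff, Finset.coe_biUnion,
          Set.mem_iUnion, Finset.mem_coe, Finset.mem_range, Set.Finite.mem_toFinset]
        by_cases hin : m i < n
        · exact Or.inr ⟨i, Nat.lt_succ_of_le (hmax i hin), hηT, hηl⟩
        · left
          push_neg at hin
          rw [hηl, min_eq_right hin] at hηp
          exact (hηp.eq_of_length (by rw [seg_length, hηl])).symm
      have hfin : {η ∈ Tstar | η.length = n}.Finite := Set.Finite.subset (S.finite_toSet) hsub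
      refine ⟨hfin, ?_⟩
      have h1 : Set.ncard {η ∈ Tstar | η.length = n} ≤ S.card := by
        have := Set.ncard_le_ncard hsub S.finite_toSet
        rwa [Set.ncard_coe_finset] at this
      have h2 : S.card ≤ 1 + (j+1) * y n := by
        rw [hS]
        refine le_trans (Finset.card_insert_le _ _) ?_
        rw [add_comm]
        refine Nat.add_le_add_left ?_ 1
        refine le_trans (Finset.card_biUnion_le) ?_
        have : ∀ i ∈ Finset.range (j+1), ((hTy (m i) n).1).toFinset.card ≤ y n := by
          intro i _
          have := (hTy (m i) n).2
          rwa [Set.ncard_eq_toFinset_card _ (hTy (m i) n).1] at this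
        calc ∑ i ∈ Finset.range (j+1), ((hTy (m i) n).1).toFinset.card
            ≤ ∑ _i ∈ Finset.range (j+1), y n := Finset.sum_le_sum this
          _ = (j+1) * y n := by rw [Finset.sum_const, Finset.card_range, smul_eq_mul]
      have h3 : 1 + (j+1) * y n ≤ (j+2) * y n := by
        have := hy n; nlinarith
      have h4 : (j+2) * y n ≤ z n := hNspec j n (le_trans (hmN j) (le_of_lt hjn))
      omega
    · -- all m i ≥ n: level set ⊆ {seg f n}
      push_neg at hcase
      have hsub : {η ∈ Tstar | η.length = n} ⊆ {seg f n} := by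
        rintro η ⟨hηT, hηl⟩
        rw [hTstar, Set.mem_iUnion] at hηT
        obtain ⟨i, hηT, hηp⟩ := hηT
        rw [hηl, min_eq_right (hcase i)] at hηp
        have : η = seg f n :=
          (hηp.eq_of_length (by rw [seg_length, hηl])).symm
        simp [this]
      refine ⟨Set.Finite.subset (Set.finite_singleton _) hsub, ?_⟩
      calc Set.ncard {η ∈ Tstar | η.length = n}
          ≤ Set.ncard {seg f n} := Set.ncard_le_ncard hsub (Set.finite_singleton _)
        _ = 1 := Set.ncard_singleton _
        _ ≤ z n := hz n
  · -- final property
    intro η hη i hi ν hpre hν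
    rw [hTstar, Set.mem_iUnion]
    refine ⟨i, hν, ?_⟩
    have hνl : m i ≤ ν.length := le_trans hi (hpre.length_le)
    rw [min_eq_left hνl]
    have : seg f (m i) <+: η := by
      have : η.take (m i) = seg f (m i) := by
        rw [hη, seg_take]
        congr 1
        omega
      rw [← this]; exact List.take_prefix _ _
    exact this.trans hpre
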